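/- Let λ, D : [0, T) → ℝ be the maximal solution of the ODE system λ' = D(1 − λ), D' = −D² − λ with initial data λ(0) = λ_0, D(0) = D_0 satisfying Δ = D_0² + 2λ_0 − 1 < 0. Then the solution is defined for all t ≥ 0 (T = ∞) and λ and D are bounded on [0, ∞). -/

import Mathlib

/-- 1D oscillations, smoothness direction of the criterion: for the system
`λ' = D(1 − λ)`, `D' = −D² − λ` with initial data satisfying
`Δ = D₀² + 2λ₀ − 1 < 0`, the (maximal) solution is defined for all `t ≥ 0`
and `λ`, `D` are bounded on `[0, ∞)`. Since the right-hand side is smooth,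
solutions are unique, so this is expressed as the existence of a globally
defined bounded solution with the given initial data. -/
theorem oneD_global_bounded (lam₀ D₀ : ℝ) (hΔ : D₀ ^ 2 + 2 * lam₀ - 1 < 0) :
    ∃ lam D : ℝ → ℝ, lam 0 = lam₀ ∧ D 0 = D₀ ∧
      (∀ t : ℝ, 0 ≤ t →
        HasDerivAt lam (D t * (1 - lam t)) t ∧
        HasDerivAt D (-(D t) ^ 2 - lam t) t) ∧
      ∃ M : ℝ, ∀ t : ℝ, 0 ≤ t → |lam t| ≤ M ∧ |D t| ≤ M := by
  have hc : 0 < 1 - lam₀ := by nlinarith [sq_nonneg D₀]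
  set c := 1 - lam₀ with hcdef
  set A := lam₀ / c with hA
  set B := D₀ / c with hB
  set q : ℝ → ℝ := fun t => 1 + A * Real.cos t + B * Real.sin t with hq
  set q' : ℝ → ℝ := fun t => B * Real.cos t - A * Real.sin t with hq'
  have hAB : A ^ 2 + B ^ 2 < 1 := by
    rw [hA, hB, div_pow, div_pow, ← add_div, div_lt_one (by positivity)]
    nlinarith
  set r := Real.sqrt (A ^ 2 + B ^ 2) with hr
  have hr1 : r < 1 := by
    rw [hr, show (1:ℝ) = Real.sqrt 1 by simp]
    exact Real.sqrt_lt_sqrt (by positivity) hAB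
  have hε : 0 < 1 - r := by linarith
  have hqlb : ∀ t, 1 - r ≤ q t := by
    intro t
    have h1 : |A * Real.cos t + B * Real.sin t| ≤ r := by
      rw [hr, ← Real.sqrt_sq_eq_abs]
      apply Real.sqrt_le_sqrt
      nlinarith [Real.sin_sq_add_cos_sq t, sq_nonneg (A * Real.sin t - B * Real.cos t)]
    have h2 := (abs_le.mp h1).1
    simp only [hq]; linarith
  have hqpos : ∀ t, 0 < q t := fun t => lt_of_lt_of_le hε (hqlb t)
  have hq'bd : ∀ t, |q' t| ≤ 1 := by
    intro t
    have h1 : |q' t| ≤ r := by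
      rw [hr, ← Real.sqrt_sq_eq_abs]
      apply Real.sqrt_le_sqrt
      simp only [hq']
      nlinarith [Real.sin_sq_add_cos_sq t, sq_nonneg (B * Real.sin t + A * Real.cos t)]
    linarith
  have hdq : ∀ t, HasDerivAt q (q' t) t := by
    intro t
    have h := (((Real.hasDerivAt_cos t).const_mul A).const_add 1).add
      ((Real.hasDerivAt_sin t).const_mul B)
    have he : A * -Real.sin t + B * Real.cos t = q' t := by simp only [hq']; ring
    rw [he] at h
    exact h
  have hdq' : ∀ t, HasDerivAt q' (1 - q t) t := by
    intro t
    have h := (((Real.hasDerivAt_cos t).const_mul B)).sub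
      ((Real.hasDerivAt_sin t).const_mul A)
    have he : B * -Real.sin t - A * Real.cos t = 1 - q t := by simp only [hq]; ring
    rw [he] at h
    exact h
  have hq0 : q 0 = 1 + A := by simp [hq]
  have hq'0 : q' 0 = B := by simp [hq']
  have h1A : 1 + A = 1 / c := by
    rw [hA]; field_simp; linarith
  refine ⟨fun t => 1 - (q t)⁻¹, fun t => q' t / q t, ?_, ?_, ?_, ?_⟩
  · show (1 : ℝ) - (q 0)⁻¹ = lam₀
    rw [hq0, h1A, one_div, inv_inv, hcdef]; ring
  · show q' 0 / q 0 = D₀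
    rw [hq'0, hq0, h1A, hB]
    field_simp
  · intro t _
    have hne : q t ≠ 0 := (hqpos t).ne'
    constructor
    · have h := ((hdq t).inv hne).const_sub 1
      have he : -(-q' t / q t ^ 2) = q' t / q t * (1 - (1 - (q t)⁻¹)) := by
        field_simp
        ring
      rw [he] at h
      exact h
    · have h := (hdq' t).div (hdq t) hne
      have he : ((1 - q t) * q t - q' t * q' t) / q t ^ 2
          = -(q' t / q t) ^ 2 - (1 - (q t)⁻¹) := by
        field_simp
        ring
      rw [he] at h
      exact h
  · refine ⟨1 + 2 / (1 - r), fun t _ => ?_⟩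
    have hle : (q t)⁻¹ ≤ (1 - r)⁻¹ := inv_anti₀ hε (hqlb t)
    have hqi : 0 < (q t)⁻¹ := inv_pos.mpr (hqpos t)
    have hri : 0 < (1 - r)⁻¹ := inv_pos.mpr hε
    have h2r : 2 / (1 - r) = 2 * (1 - r)⁻¹ := by rw [div_eq_mul_inv]
    constructor
    · show |(1 : ℝ) - (q t)⁻¹| ≤ 1 + 2 / (1 - r)
      rw [abs_le, h2r]
      constructor <;> linarith
    · show |q' t / q t| ≤ 1 + 2 / (1 - r)
      have hd : |q' t| / q t ≤ 1 / (1 - r) :=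
        div_le_div₀ zero_le_one (hq'bd t) hε (hqlb t)
      have h1r : 1 / (1 - r) = (1 - r)⁻¹ := one_div _
      rw [abs_div, abs_of_pos (hqpos t), h2r]
      linarith [hd, h1r ▸ hd]
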